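/- Let P be a finite p-group, and let g be an automorphism of P whose order is coprime to p. Then the subgroup [P, g] is contained in the subgroup generated by the minimal Engel sink of g in the semidirect product P ⋊ ⟨g⟩. -/

import Mathlib

set_option linter.unusedSectionVars false
set_option linter.unusedVariables false


/-- Left-normed iterated commutator `[x, g, g, …, g]` (with `g` repeated `n` times),
where `[x, g] = x⁻¹ g⁻¹ x g`. -/
def engel {G : Type*} [Group G] (g : G) : ℕ → G → G
  | 0, x => x
  | n + 1, x => (engel g n x)⁻¹ * g⁻¹ * engel g n x * g

/-- The minimal Engel sink of `g` in a finite group: the set of values attained by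
`[x, g, …, g]` for arbitrarily large lengths. -/
def engelSink {G : Type*} [Group G] (g : G) : Set G :=
  {y | ∀ N : ℕ, ∃ n, N ≤ n ∧ ∃ x : G, engel g n x = y}

/-- `[P, g]` for an automorphism `g` of `P`. -/
def autComm {G : Type*} [Group G] (g : MulAut G) : Subgroup G :=
  Subgroup.closure {y | ∃ x : G, x⁻¹ * g x = y}

namespace EngelAux

open Subgroup Finset
open scoped IsMulCommutative commutatorElement

variable {P : Type*} [Group P]

def tmap (h : MulAut P) (x : P) : P := x⁻¹ * h x

def sink (h : MulAut P) : Set P := ⋂ n, Set.range ((tmap h)^[n])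

lemma autComm_eq (h : MulAut P) : autComm h = Subgroup.closure (Set.range (tmap h)) := rfl






lemma tmap_semiconj {Q : Type*} [Group Q] (f : P →* Q) (h : MulAut P) (h' : MulAut Q)
    (hf : ∀ x, f (h x) = h' (f x)) (x : P) : f (tmap h x) = tmap h' (f x) := by
  simp [tmap, hf]

lemma tmap_iterate_semiconj {Q : Type*} [Group Q] (f : P →* Q) (h : MulAut P) (h' : MulAut Q)
    (hf : ∀ x, f (h x) = h' (f x)) (n : ℕ) (x : P) :
    f ((tmap h)^[n] x) = (tmap h')^[n] (f x) :=
  Function.Semiconj.iterate_right (tmap_semiconj f h h' hf) n x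

omit [Group P] in
lemma range_iterate_antitone (f : P → P) : Antitone (fun n => Set.range f^[n]) := by
  apply antitone_nat_of_succ_le
  intro n y hy
  obtain ⟨x, rfl⟩ := hy
  rw [Function.iterate_succ_apply]
  exact ⟨f x, rfl⟩

/-- An antitone sequence of naturals stabilizes. -/
lemma antitone_nat_stab (a : ℕ → ℕ) (ha : Antitone a) : ∃ N, ∀ n, N ≤ n → a n = a N := by
  obtain ⟨N, hN⟩ := Nat.sInf_mem (s := Set.range a) ⟨a 0, 0, rfl⟩
  exact ⟨N, fun n hn => le_antisymm (hN ▸ ha hn) (hN ▸ Nat.sInf_le ⟨n, rfl⟩)⟩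

lemma exists_range_iterate_stab [Finite P] (f : P → P) :
    ∃ N, ∀ n, N ≤ n → Set.range f^[n] = Set.range f^[N] := by
  obtain ⟨N, hN⟩ := antitone_nat_stab (fun n => (Set.range f^[n]).ncard)
    (fun m n hmn => Set.ncard_le_ncard (range_iterate_antitone f hmn) (Set.toFinite _))
  refine ⟨N, fun n hn => ?_⟩
  have := Set.eq_of_subset_of_ncard_le (range_iterate_antitone f hn)
    (le_of_eq (hN n hn).symm) (Set.toFinite _)
  simpa using this

lemma sink_eq [Finite P] (h : MulAut P) : ∃ N, ∀ n, N ≤ n → sink h = Set.range (tmap h)^[n] := by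
  obtain ⟨N, hN⟩ := exists_range_iterate_stab (tmap h)
  refine ⟨N, fun n hn => ?_⟩
  apply Set.Subset.antisymm
  · exact Set.iInter_subset _ n
  · intro y hy
    apply Set.mem_iInter.2
    intro m
    rcases le_or_gt m n with hmn | hmn
    · exact range_iterate_antitone (tmap h) hmn hy
    · rw [hN m (hn.trans hmn.le), ← hN n hn]; exact hy

lemma mem_sink_iff (h : MulAut P) (y : P) : y ∈ sink h ↔ ∀ n, ∃ x, (tmap h)^[n] x = y := by
  simp [sink, Set.mem_iInter, Set.mem_range]

/-- Image of the sink under a surjective equivariant hom. -/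
lemma image_sink {Q : Type*} [Group Q] [Finite P] [Finite Q] (f : P →* Q)
    (hfs : Function.Surjective f) (h : MulAut P) (h' : MulAut Q)
    (hf : ∀ x, f (h x) = h' (f x)) : f '' sink h = sink h' := by
  obtain ⟨N₁, hN₁⟩ := sink_eq h
  obtain ⟨N₂, hN₂⟩ := sink_eq h'
  rw [hN₁ (N₁ + N₂) le_self_add, hN₂ (N₁ + N₂) le_add_self]
  ext y
  constructor
  · rintro ⟨x, ⟨x', rfl⟩, rfl⟩
    exact ⟨f x', (tmap_iterate_semiconj f h h' hf _ _).symm⟩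
  · rintro ⟨q, rfl⟩
    obtain ⟨x, rfl⟩ := hfs q
    exact ⟨(tmap h)^[N₁ + N₂] x, ⟨x, rfl⟩, tmap_iterate_semiconj f h h' hf _ _⟩






lemma aut_pow_apply (h : MulAut P) (n : ℕ) (x : P) : (h ^ n) x = (⇑h)^[n] x := by
  induction n with
  | zero => rfl
  | succ n ih => rw [pow_succ', MulAut.mul_apply, Function.iterate_succ_apply', ← ih]

lemma aut_mem_of_char (h : MulAut P) (H : Subgroup P) [H.Characteristic] {x : P}
    (hx : x ∈ H) : h x ∈ H := by
  have := Subgroup.characteristic_iff_map_eq.mp (inferInstance : H.Characteristic) h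
  rw [← this]
  exact ⟨x, hx, rfl⟩

/-- restriction of `h` to the center, as a monoid hom. -/
def hZ (h : MulAut P) : ↥(center P) →* ↥(center P) :=
  (h.toMonoidHom.domRestrict (center P)).codRestrict (center P)
    (fun w => aut_mem_of_char h _ w.2)

@[simp] lemma hZ_coe (h : MulAut P) (w : ↥(center P)) : (hZ h w : P) = h w := rfl

lemma hZ_iterate_coe (h : MulAut P) (n : ℕ) (w : ↥(center P)) :
    ((hZ h)^[n] w : P) = (h ^ n) (w : P) := by
  rw [aut_pow_apply]
  induction n with
  | zero => rfl
  | succ n ih => rw [Function.iterate_succ_apply', Function.iterate_succ_apply', hZ_coe, ih]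

/-- the map `w ↦ w⁻¹ * h w` on the center, as a monoid hom. -/
def tz (h : MulAut P) : ↥(center P) →* ↥(center P) where
  toFun w := w⁻¹ * hZ h w
  map_one' := by simp
  map_mul' a b := by
    simp only [map_mul, mul_inv]
    ac_rfl

@[simp] lemma tz_coe (h : MulAut P) (w : ↥(center P)) : (tz h w : P) = tmap h (w : P) := rfl

/-- Telescoping: if `tmap h x` is central then `(h^k) x = x * ∏_{i<k} hZ^[i] t`. -/
lemma telescope (h : MulAut P) {x : P} {t : ↥(center P)} (hx : tmap h x = (t : P)) (k : ℕ) :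
    (h ^ k) x = x * ((∏ i ∈ range k, (hZ h)^[i] t : ↥(center P)) : P) := by
  induction k with
  | zero => simp
  | succ k ih =>
    have hxt : h x = x * (t : P) := by
      rw [← hx]; simp [tmap, mul_assoc]
    have hstep : (h ^ (k+1)) x = h ((h ^ k) x) := by
      rw [pow_succ', MulAut.mul_apply]
    rw [hstep, ih, map_mul, hxt]
    have h2 : h ((∏ i ∈ range k, (hZ h)^[i] t : ↥(center P)) : P)
        = ((hZ h (∏ i ∈ range k, (hZ h)^[i] t) : ↥(center P)) : P) := rfl
    rw [h2, map_prod]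
    have h3 : (t : ↥(center P)) * ∏ i ∈ range k, hZ h ((hZ h)^[i] t)
        = ∏ i ∈ range (k+1), (hZ h)^[i] t := by
      rw [Finset.prod_range_succ']
      simp only [Function.iterate_zero_apply]
      rw [mul_comm]
      congr 1
      exact Finset.prod_congr rfl fun i _ => (Function.iterate_succ_apply' (hZ h) i t).symm
    rw [← h3, Subgroup.coe_mul, ← mul_assoc, mul_assoc x]

lemma sigma_eq_one (h : MulAut P) {x : P} {t : ↥(center P)} (hx : tmap h x = (t : P)) :
    ∏ i ∈ range (orderOf h), (hZ h)^[i] t = 1 := by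
  have := telescope h hx (orderOf h)
  rw [pow_orderOf_eq_one] at this
  have h1 : x * (1 : P) = x * ((∏ i ∈ range (orderOf h), (hZ h)^[i] t : ↥(center P)) : P) := by
    simpa using this
  have := (mul_left_cancel h1).symm
  exact_mod_cast this

/-- In a commutative group with an endomorphism `f`:
there is `z` with `z⁻¹ * f z * ∏_{i<m} f^[i+1] t = (f^[m] t)^m`. -/
lemma comm_identity {A : Type*} [CommGroup A] (f : A →* A) (t : A) (m : ℕ) :
    ∃ z : A, z⁻¹ * f z * ∏ i ∈ range m, f^[i+1] t = (f^[m] t) ^ m := by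
  set G : ℕ → A := fun i => (f^[i] t) ^ i with hG
  refine ⟨∏ i ∈ range m, G i, ?_⟩
  have h1 : f (∏ i ∈ range m, G i) = ∏ i ∈ range m, (f^[i+1] t) ^ i := by
    rw [map_prod]
    exact Finset.prod_congr rfl fun i _ => by
      simp only [hG, map_pow, ← Function.iterate_succ_apply' f]
  rw [h1]
  have h2 : (∏ i ∈ range m, (f^[i+1] t) ^ i) * ∏ i ∈ range m, f^[i+1] t
      = ∏ i ∈ range m, G (i+1) := by
    rw [← Finset.prod_mul_distrib]
    exact Finset.prod_congr rfl fun i _ => by simp only [hG]; rw [pow_succ]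
  have h3 : ∏ i ∈ range m, G (i+1) = (∏ i ∈ range m, G i) * G m := by
    have e1 := Finset.prod_range_succ' G m
    rw [Finset.prod_range_succ G m] at e1
    have e2 : G 0 = 1 := by simp only [hG]; exact pow_zero _
    rw [e2, mul_one] at e1
    exact e1.symm
  rw [mul_assoc, h2, h3, inv_mul_cancel_left]

/-- shift of an `m`-periodic product -/
lemma prod_shift {A : Type*} [CommGroup A] (c : ℕ → A) (m : ℕ) (hc : c m = c 0) :
    ∏ i ∈ range m, c (i+1) = ∏ i ∈ range m, c i := by
  have h1 := Finset.prod_range_succ c m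
  have h2 := Finset.prod_range_succ' c m
  rw [h1, hc] at h2
  exact mul_right_cancel h2.symm

lemma exists_pow_root {A : Type*} [Group A] [Finite A] {p : ℕ} (hp : p.Prime)
    (hA : IsPGroup p A) {m : ℕ} (hm : Nat.Coprime m p) (a : A) : ∃ k, (a ^ m) ^ k = a := by
  obtain ⟨n, hn⟩ := hA a
  have hd : orderOf a ∣ p ^ n := orderOf_dvd_of_pow_eq_one hn
  have hcop : Nat.Coprime m (orderOf a) := (hm.pow_right n).coprime_dvd_right hd
  rcases lt_or_ge 1 (orderOf a) with h1 | h1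
  · obtain ⟨k, -, hk⟩ := Nat.exists_mul_mod_eq_one_of_coprime hcop h1
    refine ⟨k, ?_⟩
    rw [← pow_mul, ← pow_mod_orderOf, hk, pow_one]
  · have h0 : 0 < orderOf a := orderOf_pos a
    have : orderOf a = 1 := by omega
    have ha : a = 1 := orderOf_eq_one_iff.mp this
    exact ⟨1, by simp [ha]⟩







lemma map_autComm {Q : Type*} [Group Q] (f : P →* Q) (hfs : Function.Surjective f)
    (h : MulAut P) (h' : MulAut Q) (hf : ∀ x, f (h x) = h' (f x)) :
    (autComm h).map f = autComm h' := by
  rw [autComm_eq, autComm_eq, MonoidHom.map_closure]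
  congr 1
  ext y
  constructor
  · rintro ⟨-, ⟨x, rfl⟩, rfl⟩
    exact ⟨f x, (tmap_semiconj f h h' hf x).symm⟩
  · rintro ⟨q, rfl⟩
    obtain ⟨x, rfl⟩ := hfs q
    exact ⟨tmap h x, ⟨x, rfl⟩, tmap_semiconj f h h' hf x⟩

lemma aut_pow_apply' (h : MulAut P) (n : ℕ) (x : P) : (h ^ n) x = (⇑h)^[n] x := by
  induction n with
  | zero => rfl
  | succ n ih => rw [pow_succ', MulAut.mul_apply, Function.iterate_succ_apply', ← ih]

lemma aut_pow_semiconj {Q : Type*} [Group Q] (f : P →* Q) (h : MulAut P) (h' : MulAut Q)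
    (hf : ∀ x, f (h x) = h' (f x)) (m : ℕ) (x : P) : f ((h ^ m) x) = (h' ^ m) (f x) := by
  rw [aut_pow_apply', aut_pow_apply']
  exact Function.Semiconj.iterate_right hf m x


section Central

variable [Finite P] {p : ℕ}

lemma central_lift (hp : p.Prime) (hP : IsPGroup p P) (h : MulAut P)
    (hcop : Nat.Coprime (orderOf h) p) {x : P} (hx : tmap h x ∈ center P) :
    ∃ c z, h c = c ∧ z ∈ center P ∧ x = c * z := by
  set m := orderOf h with hm
  set t : ↥(center P) := ⟨tmap h x, hx⟩ with htdef
  have htx : tmap h x = (t : P) := rfl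
  obtain ⟨z', hz'⟩ := comm_identity (hZ h) t m
  have hper : (hZ h)^[m] t = t := by
    apply Subtype.ext
    rw [hZ_iterate_coe, hm, pow_orderOf_eq_one, MulAut.one_apply]
  have hsigma : ∏ i ∈ range m, (hZ h)^[i] t = 1 := sigma_eq_one h htx
  have hshift : ∏ i ∈ range m, (hZ h)^[i+1] t = 1 := by
    rw [prod_shift (fun i => (hZ h)^[i] t) m (by simpa using hper), hsigma]
  rw [hshift, mul_one, hper] at hz'
  obtain ⟨k, hk⟩ := exists_pow_root hp (hP.to_subgroup (center P)) hcop t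
  set z₀ : ↥(center P) := z' ^ k with hz₀
  have htz : tz h z₀ = t := by
    rw [map_pow]
    have : tz h z' = t ^ m := hz'
    rw [this, hk]
  have h2 : ((z₀ : P))⁻¹ * h (z₀ : P) = (t : P) := by
    have := congrArg (fun w : ↥(center P) => (w : P)) htz
    simpa [tmap] using this
  have h1 : h (z₀ : P) = (z₀ : P) * (t : P) := by
    rw [← h2]; group
  refine ⟨x * (z₀ : P)⁻¹, z₀, ?_, z₀.2, by simp⟩
  have hx2 : h x = x * (t : P) := by
    rw [← htx, tmap]; group
  rw [map_mul, map_inv, h1, hx2]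
  group

lemma central_split (hp : p.Prime) (hP : IsPGroup p P) (h : MulAut P)
    (hcop : Nat.Coprime (orderOf h) p) {u : P} (hu : u ∈ center P) :
    ∃ c w, h c = c ∧ u = c * tmap h w := by
  set m := orderOf h with hm
  set u' : ↥(center P) := ⟨u, hu⟩ with hu'
  obtain ⟨z', hz'⟩ := comm_identity (hZ h) u' m
  have hper : (hZ h)^[m] u' = u' := by
    apply Subtype.ext
    rw [hZ_iterate_coe, hm, pow_orderOf_eq_one, MulAut.one_apply]
  rw [hper] at hz'
  set σ : ↥(center P) := ∏ i ∈ range m, (hZ h)^[i+1] u' with hσ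
  have hσfix : hZ h σ = σ := by
    rw [hσ, map_prod]
    have e1 : ∀ i, hZ h ((hZ h)^[i+1] u') = (fun j => (hZ h)^[j+1] u') (i+1) := by
      intro i
      simp only
      rw [← Function.iterate_succ_apply' (hZ h)]
    rw [Finset.prod_congr rfl fun i _ => e1 i]
    refine prod_shift (fun j => (hZ h)^[j+1] u') m ?_
    show (⇑(hZ h))^[m+1] u' = (⇑(hZ h))^[0+1] u'
    rw [Function.iterate_succ_apply' (⇑(hZ h)) m u', hper]
    simp
  obtain ⟨k, hk⟩ := exists_pow_root hp (hP.to_subgroup (center P)) hcop u'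
  have hdecomp : u' = σ ^ k * tz h (z' ^ k) := by
    rw [map_pow]
    have : (tz h z' * σ) ^ k = u' := by
      have : tz h z' * σ = u' ^ m := hz'
      rw [this, hk]
    rw [← this, mul_pow, mul_comm]
  refine ⟨((σ ^ k : ↥(center P)) : P), ((z' ^ k : ↥(center P)) : P), ?_, ?_⟩
  · have : hZ h (σ ^ k) = σ ^ k := by rw [map_pow, hσfix]
    have := congrArg (fun w : ↥(center P) => (w : P)) this
    simpa using this
  · have h3 : tmap h ((z' ^ k : ↥(center P)) : P) = ((tz h (z' ^ k) : ↥(center P)) : P) := rfl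
    rw [h3, ← Subgroup.coe_mul, ← hdecomp]

end Central

universe u

lemma lemA {p : ℕ} (hp : p.Prime) :
    ∀ (n : ℕ) (P : Type u) [Group P] [Finite P], Nat.card P ≤ n → IsPGroup p P →
      ∀ (h : MulAut P), Nat.Coprime (orderOf h) p →
        ∀ x : P, ∃ c v, h c = c ∧ v ∈ autComm h ∧ x = c * v := by
  intro n
  induction n with
  | zero =>
    intro P _ _ hcard _ h _ x
    have : 0 < Nat.card P := Nat.card_pos
    omega
  | succ n ih =>
    intro P _ _ hcard hP h hcop x
    haveI : Fact p.Prime := ⟨hp⟩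
    rcases subsingleton_or_nontrivial P with hs | hnt
    · exact ⟨1, 1, by simp, one_mem _, Subsingleton.elim _ _⟩
    · have hZnt : Nontrivial ↥(Subgroup.center P) := hP.center_nontrivial
      have hmapc : (Subgroup.center P).map (h : P ≃* P).toMonoidHom = Subgroup.center P :=
        Subgroup.characteristic_iff_map_eq.mp inferInstance h
      set π := QuotientGroup.mk' (Subgroup.center P) with hπ
      set h' : MulAut (P ⧸ Subgroup.center P) :=
        QuotientGroup.congr (Subgroup.center P) (Subgroup.center P) (h : P ≃* P) hmapc with hh'
      have hsemi : ∀ y : P, π (h y) = h' (π y) := by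
        intro y
        exact (QuotientGroup.congr_mk _ _ _ _ y).symm
      have hπs : Function.Surjective π := QuotientGroup.mk'_surjective _
      have hord : orderOf h' ∣ orderOf h := by
        apply orderOf_dvd_of_pow_eq_one
        apply DFunLike.ext
        intro q
        obtain ⟨y, rfl⟩ := hπs q
        rw [← aut_pow_semiconj π h h' hsemi, pow_orderOf_eq_one]
        simp
      have hcop' : Nat.Coprime (orderOf h') p := Nat.Coprime.coprime_dvd_left hord hcop
      have hPQ : IsPGroup p (P ⧸ Subgroup.center P) := hP.to_quotient _
      have hcards : Nat.card (P ⧸ Subgroup.center P) ≤ n := by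
        have h1 : Nat.card P = Nat.card (P ⧸ Subgroup.center P) * Nat.card (Subgroup.center P) :=
          Subgroup.card_eq_card_quotient_mul_card_subgroup _
        have h2 : 2 ≤ Nat.card (Subgroup.center P) := Finite.one_lt_card_iff_nontrivial.mpr hZnt
        have h3 : 0 < Nat.card (P ⧸ Subgroup.center P) := Nat.card_pos
        have h4 : Nat.card (P ⧸ Subgroup.center P) * 2 ≤ Nat.card P := by
          rw [h1]; exact Nat.mul_le_mul_left _ h2
        omega
      obtain ⟨c', v', hc', hv', hxdec⟩ := ih (P ⧸ Subgroup.center P) hcards hPQ h' hcop' (π x)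
      have hmapA : (autComm h).map π = autComm h' := map_autComm π hπs h h' hsemi
      rw [← hmapA] at hv'
      obtain ⟨v, hv, hπv⟩ := hv'
      have e1 : π (x * v⁻¹) = c' := by
        rw [map_mul, map_inv, hπv, hxdec]
        group
      have e2 : π (x * v⁻¹) = π (h (x * v⁻¹)) := by
        rw [hsemi, e1, hc']
      have hc'' : tmap h (x * v⁻¹) ∈ Subgroup.center P := by
        simpa [tmap] using QuotientGroup.eq.mp e2
      obtain ⟨c, z, hcfix, hzc, hxz⟩ := central_lift hp hP h hcop hc''
      obtain ⟨c₂, w, hc₂, hzdec⟩ := central_split hp hP h hcop hzc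
      refine ⟨c * c₂, tmap h w * v, by rw [map_mul, hcfix, hc₂],
        mul_mem (Subgroup.subset_closure ⟨w, rfl⟩) hv, ?_⟩
      have e3 : x * v⁻¹ = c * (c₂ * tmap h w) := by rw [hxz, hzdec]
      calc x = (x * v⁻¹) * v := by group
      _ = (c * (c₂ * tmap h w)) * v := by rw [e3]
      _ = (c * c₂) * (tmap h w * v) := by group

lemma conj_central {a z : P} (b : P) (hz : z ∈ center P) :
    (a * z) * b * (a * z)⁻¹ = a * b * a⁻¹ := by
  have hz' := Subgroup.mem_center_iff.mp hz
  rw [mul_inv_rev]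
  calc a * z * b * (z⁻¹ * a⁻¹) = a * (b * z) * z⁻¹ * a⁻¹ := by rw [hz' b]; group
  _ = a * b * a⁻¹ := by group

lemma commutator_central (h₁ h₂ : P) {z w : P} (hz : z ∈ center P) (hw : w ∈ center P) :
    ⁅h₁ * z, h₂ * w⁆ = ⁅h₁, h₂⁆ := by
  have hw' := Subgroup.mem_center_iff.mp hw
  calc ⁅h₁ * z, h₂ * w⁆ = (h₁*z) * (h₂*w) * (h₁*z)⁻¹ * (h₂*w)⁻¹ := commutatorElement_def _ _
  _ = (h₁ * (h₂*w) * h₁⁻¹) * (h₂*w)⁻¹ := by rw [conj_central _ hz]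
  _ = (h₁ * h₂ * (w * h₁⁻¹)) * (w⁻¹ * h₂⁻¹) := by rw [mul_inv_rev]; group
  _ = (h₁ * h₂ * (h₁⁻¹ * w)) * (w⁻¹ * h₂⁻¹) := by rw [← hw' h₁⁻¹]
  _ = h₁ * h₂ * h₁⁻¹ * h₂⁻¹ := by group
  _ = ⁅h₁, h₂⁆ := (commutatorElement_def _ _).symm

/-- In a finite `p`-group, a subgroup that generates together with the commutator
subgroup is the whole group. -/
lemma lem6 {p : ℕ} (hp : p.Prime) :
    ∀ (n : ℕ) (P : Type u) [Group P] [Finite P], Nat.card P ≤ n → IsPGroup p P →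
      ∀ H : Subgroup P, H ⊔ commutator P = ⊤ → H = ⊤ := by
  intro n
  induction n with
  | zero =>
    intro P _ _ hcard _ H _
    have : 0 < Nat.card P := Nat.card_pos
    omega
  | succ n ih =>
    intro P _ _ hcard hP H hsup
    haveI : Fact p.Prime := ⟨hp⟩
    rcases subsingleton_or_nontrivial P with hs | hnt
    · rw [eq_top_iff]
      intro x _
      have : x = 1 := Subsingleton.elim _ _
      rw [this]; exact one_mem _
    · have hZnt : Nontrivial ↥(Subgroup.center P) := hP.center_nontrivial
      set π := QuotientGroup.mk' (Subgroup.center P) with hπ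
      have hπs : Function.Surjective π := QuotientGroup.mk'_surjective _
      have hPQ : IsPGroup p (P ⧸ Subgroup.center P) := hP.to_quotient _
      have hcards : Nat.card (P ⧸ Subgroup.center P) ≤ n := by
        have h1 : Nat.card P = Nat.card (P ⧸ Subgroup.center P) * Nat.card (Subgroup.center P) :=
          Subgroup.card_eq_card_quotient_mul_card_subgroup _
        have h2 : 2 ≤ Nat.card (Subgroup.center P) := Finite.one_lt_card_iff_nontrivial.mpr hZnt
        have h3 : 0 < Nat.card (P ⧸ Subgroup.center P) := Nat.card_pos
        have h4 : Nat.card (P ⧸ Subgroup.center P) * 2 ≤ Nat.card P := by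
          rw [h1]; exact Nat.mul_le_mul_left _ h2
        omega
      have hcommmap : (commutator P).map π = commutator (P ⧸ Subgroup.center P) := by
        rw [commutator_def, Subgroup.map_commutator, commutator_def,
          Subgroup.map_top_of_surjective π hπs]
      have hmapsup : H.map π ⊔ commutator (P ⧸ Subgroup.center P) = ⊤ := by
        rw [← hcommmap, ← Subgroup.map_sup, hsup, Subgroup.map_top_of_surjective π hπs]
      have hHQ : H.map π = ⊤ := ih _ hcards hPQ _ hmapsup
      have hdecomp : ∀ a : P, ∃ h ∈ H, ∃ z ∈ Subgroup.center P, a = h * z := by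
        intro a
        have : π a ∈ H.map π := by rw [hHQ]; trivial
        obtain ⟨h, hh, hπh⟩ := this
        refine ⟨h, hh, h⁻¹ * a, QuotientGroup.eq.mp hπh, by group⟩
      have hcomm_le : commutator P ≤ H := by
        rw [commutator_def]
        rw [Subgroup.commutator_le]
        intro g₁ _ g₂ _
        obtain ⟨h₁, hh₁, z, hz, rfl⟩ := hdecomp g₁
        obtain ⟨h₂, hh₂, w, hw, rfl⟩ := hdecomp g₂
        rw [commutator_central h₁ h₂ hz hw, commutatorElement_def]
        exact mul_mem (mul_mem (mul_mem hh₁ hh₂) (inv_mem hh₁)) (inv_mem hh₂)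
      rw [← hsup, sup_eq_left.mpr hcomm_le]

lemma lemC {p : ℕ} (hp : p.Prime) :
    ∀ (n : ℕ) (P : Type u) [Group P] [Finite P], Nat.card P ≤ n → IsPGroup p P →
      ∀ h : MulAut P, autComm h = ⊤ → (⊤ : Subgroup P) ≤ Subgroup.closure (sink h) := by
  intro n
  induction n with
  | zero =>
    intro P _ _ hcard _ h _
    have : 0 < Nat.card P := Nat.card_pos
    omega
  | succ n ih =>
    intro P _ _ hcard hP h hcomm
    by_cases hab : commutator P = ⊥
    · -- "abelian" case : `tmap h` is surjective, hence the sink is everything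
      have hcommall : ∀ a b : P, a * b = b * a := by
        intro a b
        have h1 : ⁅a, b⁆ ∈ commutator P :=
          Subgroup.commutator_mem_commutator (Subgroup.mem_top a) (Subgroup.mem_top b)
        rw [hab, Subgroup.mem_bot] at h1
        exact commutatorElement_eq_one_iff_mul_comm.mp h1
      set H₀ : Subgroup P :=
        { carrier := Set.range (tmap h)
          one_mem' := ⟨1, by simp [tmap]⟩
          mul_mem' := by
            rintro a b ⟨x, rfl⟩ ⟨y, rfl⟩
            refine ⟨x * y, ?_⟩
            simp only [tmap, map_mul, mul_inv_rev]
            calc y⁻¹ * x⁻¹ * (h x * h y) = y⁻¹ * (x⁻¹ * h x) * h y := by group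
            _ = (x⁻¹ * h x) * y⁻¹ * h y := by rw [hcommall y⁻¹ (x⁻¹ * h x)]
            _ = x⁻¹ * h x * (y⁻¹ * h y) := by group
          inv_mem' := by
            rintro a ⟨x, rfl⟩
            refine ⟨x⁻¹, ?_⟩
            simp only [tmap, map_inv, inv_inv, mul_inv_rev]
            exact hcommall x (h x)⁻¹ } with hH₀
      have hH₀top : H₀ = ⊤ := by
        rw [← Subgroup.closure_eq H₀]
        exact (autComm_eq h ▸ hcomm : Subgroup.closure (Set.range (tmap h)) = ⊤)
      have hsurj : Function.Surjective (tmap h) := by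
        intro y
        have : y ∈ H₀ := by rw [hH₀top]; trivial
        exact this
      intro x _
      apply Subgroup.subset_closure
      apply Set.mem_iInter.2
      intro m
      exact hsurj.iterate m x
    · -- quotient by the commutator subgroup
      haveI : Fact p.Prime := ⟨hp⟩
      set K := commutator P with hK
      have hmapc : K.map (h : P ≃* P).toMonoidHom = K :=
        Subgroup.characteristic_iff_map_eq.mp inferInstance h
      set π := QuotientGroup.mk' K with hπ
      set h' : MulAut (P ⧸ K) := QuotientGroup.congr K K (h : P ≃* P) hmapc with hh'
      have hsemi : ∀ y : P, π (h y) = h' (π y) := by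
        intro y
        exact (QuotientGroup.congr_mk _ _ _ _ y).symm
      have hπs : Function.Surjective π := QuotientGroup.mk'_surjective _
      have hPQ : IsPGroup p (P ⧸ K) := hP.to_quotient _
      have hKnt : Nontrivial ↥K := (Subgroup.nontrivial_iff_ne_bot K).mpr hab
      have hcards : Nat.card (P ⧸ K) ≤ n := by
        have h1 : Nat.card P = Nat.card (P ⧸ K) * Nat.card K :=
          Subgroup.card_eq_card_quotient_mul_card_subgroup _
        have h2 : 2 ≤ Nat.card K := Finite.one_lt_card_iff_nontrivial.mpr hKnt
        have h3 : 0 < Nat.card (P ⧸ K) := Nat.card_pos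
        have h4 : Nat.card (P ⧸ K) * 2 ≤ Nat.card P := by
          rw [h1]; exact Nat.mul_le_mul_left _ h2
        omega
      have hcomm' : autComm h' = ⊤ := by
        rw [← map_autComm π hπs h h' hsemi, hcomm, Subgroup.map_top_of_surjective π hπs]
      have hQ := ih (P ⧸ K) hcards hPQ h' hcomm'
      have hsinkmap : π '' sink h = sink h' := image_sink π hπs h h' hsemi
      have hmaptop : (Subgroup.closure (sink h)).map π = ⊤ := by
        rw [MonoidHom.map_closure, hsinkmap, eq_top_iff]
        exact hQ
      have hsupK : Subgroup.closure (sink h) ⊔ K = ⊤ := by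
        rw [eq_top_iff]
        intro x _
        have : π x ∈ (Subgroup.closure (sink h)).map π := by rw [hmaptop]; trivial
        obtain ⟨a, ha, hπa⟩ := this
        have hk : a⁻¹ * x ∈ K := QuotientGroup.eq.mp hπa
        have : x = a * (a⁻¹ * x) := by group
        rw [this]
        exact mul_mem (Subgroup.mem_sup_left ha) (Subgroup.mem_sup_right hk)
      rw [lem6 hp (Nat.card P) P le_rfl hP _ hsupK]

section Restriction

variable [Finite P] {p : ℕ}

/-- `autComm h` is `h`-invariant. -/
lemma map_autComm_self (h : MulAut P) :
    (autComm h).map (h : P ≃* P).toMonoidHom = autComm h :=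
  map_autComm (h : P ≃* P).toMonoidHom (h : P ≃* P).surjective h h (fun _ => rfl)

/-- The restriction of `h` to `autComm h`. -/
noncomputable def hV (h : MulAut P) : MulAut ↥(autComm h) :=
  ((h : P ≃* P).subgroupMap (autComm h)).trans (MulEquiv.subgroupCongr (map_autComm_self h))

lemma hV_coe (h : MulAut P) (v : ↥(autComm h)) : ((hV h v : ↥(autComm h)) : P) = h (v : P) := by
  simp [hV, MulEquiv.trans_apply, MulEquiv.subgroupCongr_apply, MulEquiv.coe_subgroupMap_apply]
  rfl

lemma hV_semiconj (h : MulAut P) :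
    ∀ v : ↥(autComm h), (autComm h).subtype (hV h v) = h ((autComm h).subtype v) :=
  fun v => hV_coe h v

lemma orderOf_hV_dvd (h : MulAut P) : orderOf (hV h) ∣ orderOf h := by
  apply orderOf_dvd_of_pow_eq_one
  apply DFunLike.ext
  intro v
  apply Subtype.ext
  have := aut_pow_semiconj (autComm h).subtype (hV h) h (hV_semiconj h) (orderOf h) v
  rw [pow_orderOf_eq_one] at this
  simpa using this

/-- Lemma B : the restriction of `h` to `V = [P,h]` satisfies `[V,h] = V`. -/
lemma autComm_hV_eq_top (hp : p.Prime) (hP : IsPGroup p P) (h : MulAut P)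
    (hcop : Nat.Coprime (orderOf h) p) : autComm (hV h) = ⊤ := by
  have hcop' : Nat.Coprime (orderOf (hV h)) p :=
    Nat.Coprime.coprime_dvd_left (orderOf_hV_dvd h) hcop
  have key : autComm h ≤ (autComm (hV h)).map (autComm h).subtype := by
    show Subgroup.closure (Set.range (tmap h)) ≤ _
    apply Subgroup.closure_le _ |>.mpr
    rintro - ⟨x, rfl⟩
    obtain ⟨c, v, hc, hv, rfl⟩ :=
      lemA hp (Nat.card P) P le_rfl hP h hcop x
    have e1 : tmap h (c * v) = tmap h v := by
      simp only [tmap, map_mul, mul_inv_rev, hc]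
      group
    have e2 : tmap h v = ((tmap (hV h) ⟨v, hv⟩ : ↥(autComm h)) : P) := by
      have : ((tmap (hV h) ⟨v, hv⟩ : ↥(autComm h)) : P) = (v : P)⁻¹ * h v := by
        simp [tmap, hV_coe]
      rw [this, tmap]
    rw [e1, e2]
    exact ⟨tmap (hV h) ⟨v, hv⟩, Subgroup.subset_closure ⟨⟨v, hv⟩, rfl⟩, rfl⟩
  rw [eq_top_iff]
  intro v' _
  have : (v' : P) ∈ (autComm (hV h)).map (autComm h).subtype := key v'.2
  obtain ⟨w, hw, hww⟩ := this
  have : w = v' := Subtype.ext hww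
  rwa [← this]

/-- Main chain in `P` : `[P,h] ≤ ⟨sink h⟩` for a coprime automorphism of a `p`-group. -/
lemma main_chain (hp : p.Prime) (hP : IsPGroup p P) (h : MulAut P)
    (hcop : Nat.Coprime (orderOf h) p) : autComm h ≤ Subgroup.closure (sink h) := by
  have htop := autComm_hV_eq_top hp hP h hcop
  have hC := lemC hp (Nat.card ↥(autComm h)) ↥(autComm h) le_rfl
    (hP.to_subgroup (autComm h)) (hV h) htop
  intro x hx
  have h1 : (⟨x, hx⟩ : ↥(autComm h)) ∈ Subgroup.closure (sink (hV h)) := hC trivial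
  have h2 : x ∈ (Subgroup.closure (sink (hV h))).map (autComm h).subtype :=
    ⟨⟨x, hx⟩, h1, rfl⟩
  rw [MonoidHom.map_closure] at h2
  refine Subgroup.closure_mono ?_ h2
  rintro - ⟨w, hw, rfl⟩
  apply Set.mem_iInter.2
  intro m
  obtain ⟨v₀, hv₀⟩ := Set.mem_iInter.mp hw m
  refine ⟨(v₀ : P), ?_⟩
  have := tmap_iterate_semiconj (autComm h).subtype (hV h) h (hV_semiconj h) m v₀
  rw [hv₀] at this
  exact this.symm

end Restriction

lemma autComm_le_inv (g : MulAut P) : autComm g ≤ autComm g⁻¹ := by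
  show autComm g ≤ Subgroup.closure (Set.range (tmap g⁻¹))
  show Subgroup.closure (Set.range (tmap g)) ≤ _
  apply Subgroup.closure_le _ |>.mpr
  rintro - ⟨x, rfl⟩
  have e : tmap g x = (tmap g⁻¹ (g x))⁻¹ := by
    simp only [tmap, MulAut.inv_apply_self, mul_inv_rev, inv_inv]
  rw [e]
  exact inv_mem (Subgroup.subset_closure ⟨g x, rfl⟩)

lemma autComm_inv (g : MulAut P) : autComm g = autComm g⁻¹ :=
  le_antisymm (autComm_le_inv g) (by simpa using autComm_le_inv g⁻¹)

section Semidirect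

open SemidirectProduct

variable (g : MulAut P)

abbrev SDP (g : MulAut P) : Type _ := P ⋊[(Subgroup.zpowers g).subtype] ↥(Subgroup.zpowers g)

lemma engel_inl (n : ℕ) (a : P) :
    engel (inr ⟨g, Subgroup.mem_zpowers g⟩ : SDP g) n (inl a) = inl ((tmap g⁻¹)^[n] a) := by
  induction n with
  | zero => rfl
  | succ n ih =>
    show (engel (inr ⟨g, Subgroup.mem_zpowers g⟩ : SDP g) n (inl a))⁻¹ *
      (inr ⟨g, Subgroup.mem_zpowers g⟩)⁻¹ *
      engel (inr ⟨g, Subgroup.mem_zpowers g⟩ : SDP g) n (inl a) *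
      inr ⟨g, Subgroup.mem_zpowers g⟩ = _
    rw [ih]
    set γ : ↥(Subgroup.zpowers g) := ⟨g, Subgroup.mem_zpowers g⟩ with hγ
    set b := (tmap g⁻¹)^[n] a with hb
    have e1 : (inl b : SDP g)⁻¹ * (inr γ)⁻¹ * inl b * inr γ
        = inl b⁻¹ * ((inr γ)⁻¹ * inl b * inr γ) := by
      rw [map_inv]
      group
    have e2 : (inr γ : SDP g)⁻¹ * inl b * inr γ = inl (((Subgroup.zpowers g).subtype γ)⁻¹ b) := by
      rw [← map_inv]
      exact (inl_aut_inv γ b).symm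
    have e3 : ((Subgroup.zpowers g).subtype γ)⁻¹ b = g⁻¹ b := rfl
    rw [e1, e2, e3, ← map_mul, Function.iterate_succ_apply']
    rfl

lemma inl_sink_subset :
    (inl : P →* SDP g) '' sink g⁻¹ ⊆ engelSink (inr ⟨g, Subgroup.mem_zpowers g⟩ : SDP g) := by
  rintro - ⟨y, hy, rfl⟩ N
  obtain ⟨x, hx⟩ := Set.mem_iInter.mp hy N
  exact ⟨N, le_rfl, inl x, by rw [engel_inl, hx]⟩

end Semidirect

end EngelAux

/-- If `P` is a finite `p`-group and `g` an automorphism of `P` of order coprime to `p`,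
then `[P, g]` is contained in the subgroup generated by the minimal Engel sink of `g`
in the semidirect product `P ⋊ ⟨g⟩`. -/
theorem stmt1 (p : ℕ) (hp : p.Prime) (P : Type) [Group P] [Fintype P]
    (hP : IsPGroup p P) (g : MulAut P) (hg : Nat.Coprime (orderOf g) p) :
    (autComm g).map
        (SemidirectProduct.inl :
          P →* P ⋊[(Subgroup.zpowers g).subtype] ↥(Subgroup.zpowers g)) ≤
      Subgroup.closure
        (engelSink (SemidirectProduct.inr ⟨g, Subgroup.mem_zpowers g⟩)) := by
  have h1 : autComm g ≤ Subgroup.closure (EngelAux.sink g⁻¹) := by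
    rw [EngelAux.autComm_inv g]
    exact EngelAux.main_chain hp hP g⁻¹ (by rwa [orderOf_inv])
  calc (autComm g).map (SemidirectProduct.inl (φ := (Subgroup.zpowers g).subtype))
      ≤ (Subgroup.closure (EngelAux.sink g⁻¹)).map SemidirectProduct.inl :=
        Subgroup.map_mono h1
  _ = Subgroup.closure (SemidirectProduct.inl '' EngelAux.sink g⁻¹) :=
        MonoidHom.map_closure _ _
  _ ≤ Subgroup.closure (engelSink (SemidirectProduct.inr ⟨g, Subgroup.mem_zpowers g⟩)) :=
        Subgroup.closure_mono (EngelAux.inl_sink_subset g)
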